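/- The deferred correction iteration is a contraction: if L¹ is coercive with constant α₁, L² has a unique root U*, and L² − L¹ is Lipschitz with constant α₂Δ, then the iteration defined by L¹(U^{(r+1)}) = L¹(U^{(r)}) − L²(U^{(r)}) satisfies ‖U^{(r+1)} − U*‖ ≤ (α₂Δ/α₁)‖U^{(r)} − U*‖, hence after R iterations the error is bounded by ν^R ‖U^{(0)} − U*‖ with ν = α₂Δ/α₁. -/
import Mathlib


/-- Deferred correction contraction: if `L¹` is coercive with constant `α₁`,
`L²(U*) = 0`, and `L² − L¹` is Lipschitz with constant `α₂Δ`, then the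
iteration `L¹(U^{r+1}) = L¹(U^r) − L²(U^r)` contracts with ratio
`ν = α₂Δ/α₁`, and after `R` iterations the error is at most
`ν^R ‖U⁰ − U*‖`. -/
theorem deferred_correction_contraction
    {E : Type*} [NormedAddCommGroup E] [NormedSpace ℝ E]
    (L1 L2 : E → E) (α₁ α₂ Δ : ℝ) (hα₁ : 0 < α₁)
    (hcoer : ∀ U V, α₁ * ‖U - V‖ ≤ ‖L1 U - L1 V‖)
    (Ustar : E) (hroot : L2 Ustar = 0)
    (hLip : ∀ U V, ‖(L2 U - L1 U) - (L2 V - L1 V)‖ ≤ α₂ * Δ * ‖U - V‖)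
    (hν : α₂ * Δ / α₁ < 1)
    (U : ℕ → E)
    (hiter : ∀ r, L1 (U (r + 1)) = L1 (U r) - L2 (U r)) :
    (∀ r, ‖U (r + 1) - Ustar‖ ≤ (α₂ * Δ / α₁) * ‖U r - Ustar‖) ∧
    (∀ R, ‖U R - Ustar‖ ≤ (α₂ * Δ / α₁) ^ R * ‖U 0 - Ustar‖) := by
  have key : ∀ r, ‖U (r + 1) - Ustar‖ ≤ (α₂ * Δ / α₁) * ‖U r - Ustar‖ := by
    intro r
    have h1 : α₁ * ‖U (r + 1) - Ustar‖ ≤ ‖L1 (U (r + 1)) - L1 Ustar‖ := hcoer _ _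
    have h2 : L1 (U (r + 1)) - L1 Ustar
        = (L2 Ustar - L1 Ustar) - (L2 (U r) - L1 (U r)) := by
      rw [hiter r, hroot]; abel
    have h3 : ‖L1 (U (r + 1)) - L1 Ustar‖ ≤ α₂ * Δ * ‖U r - Ustar‖ := by
      rw [h2]
      calc ‖(L2 Ustar - L1 Ustar) - (L2 (U r) - L1 (U r))‖
          ≤ α₂ * Δ * ‖Ustar - U r‖ := hLip _ _
        _ = α₂ * Δ * ‖U r - Ustar‖ := by rw [norm_sub_rev]
    have h4 := h1.trans h3
    rw [div_mul_eq_mul_div, le_div_iff₀ hα₁]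
    linarith
  refine ⟨key, ?_⟩
  by_cases h0 : 0 ≤ α₂ * Δ / α₁
  · intro R
    induction R with
    | zero => simp
    | succ n ih =>
      calc ‖U (n + 1) - Ustar‖ ≤ (α₂ * Δ / α₁) * ‖U n - Ustar‖ := key n
        _ ≤ (α₂ * Δ / α₁) * ((α₂ * Δ / α₁) ^ n * ‖U 0 - Ustar‖) :=
            mul_le_mul_of_nonneg_left ih h0
        _ = (α₂ * Δ / α₁) ^ (n + 1) * ‖U 0 - Ustar‖ := by ring
  · push_neg at h0
    have hU0 : ‖U 0 - Ustar‖ = 0 := by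
      by_contra h
      have hpos : 0 < ‖U 0 - Ustar‖ := lt_of_le_of_ne (norm_nonneg _) (Ne.symm h)
      have := key 0
      nlinarith [norm_nonneg (U 1 - Ustar)]
    have hall : ∀ R, ‖U R - Ustar‖ = 0 := by
      intro R
      induction R with
      | zero => exact hU0
      | succ n ih =>
        have := key n
        rw [ih, mul_zero] at this
        exact le_antisymm this (norm_nonneg _)
    intro R
    rw [hall R, hU0, mul_zero]
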